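/- Let (W,S) be a Coxeter system, v, w, x ∈ W with v ≤ w in Bruhat order. Then there exists x' ≤ x such that vx ≤ w·x' and ℓ(w x') = ℓ(w) + ℓ(x'). -/

import Mathlib

namespace CoxeterPaper

open CoxeterSystem

variable {B : Type*} {W : Type*} [Group W] {M : CoxeterMatrix B}

/-- The Bruhat order on a Coxeter group: the reflexive-transitive closure of the
relation `a < a * t` for `t` a reflection with length increasing. -/
def BruhatLE (cs : CoxeterSystem M W) (x y : W) : Prop :=
  Relation.ReflTransGen
    (fun a b => (∃ t, cs.IsReflection t ∧ b = a * t) ∧ cs.length a < cs.length b) x y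

/-- One step of the Demazure product with a simple reflection. -/
noncomputable def demStep (cs : CoxeterSystem M W) (x : W) (i : B) : W :=
  if cs.length x < cs.length (x * cs.simple i) then x * cs.simple i else x

/-- The Demazure product of `x` with the word `l`. -/
noncomputable def demWord (cs : CoxeterSystem M W) (x : W) (l : List B) : W :=
  l.foldl (demStep cs) x

/-- The Demazure product (Coxeter monoid product) of two elements: fold the
Demazure action of a reduced word of `y` onto `x`. -/
noncomputable def dem (cs : CoxeterSystem M W) (x y : W) : W :=
  demWord cs x (Classical.choose (cs.exists_reduced_word y))

/-- The standard parabolic subgroup attached to a set of simple indices. -/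
def parabolic (cs : CoxeterSystem M W) (I : Set B) : Subgroup W :=
  Subgroup.closure (cs.simple '' I)

/-- `I` is finitary if the parabolic subgroup `W_I` is finite. -/
def Finitary (cs : CoxeterSystem M W) (I : Set B) : Prop :=
  (parabolic cs I : Set W).Finite

/-- The double coset `W_I w W_J` as a subset of `W`. -/
def doset (cs : CoxeterSystem M W) (I J : Set B) (w : W) : Set W :=
  {x | ∃ a ∈ parabolic cs I, ∃ b ∈ parabolic cs J, x = a * w * b}

/-- `p` is an `(I,J)`-double coset. -/
def IsDCoset (cs : CoxeterSystem M W) (I J : Set B) (p : Set W) : Prop :=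
  ∃ w, p = doset cs I J w

/-- `m` is the Bruhat-minimal element of `p`. -/
def IsMinOf (cs : CoxeterSystem M W) (p : Set W) (m : W) : Prop :=
  m ∈ p ∧ ∀ x ∈ p, BruhatLE cs m x

/-- `m` is the Bruhat-maximal element of `p`. -/
def IsMaxOf (cs : CoxeterSystem M W) (p : Set W) (m : W) : Prop :=
  m ∈ p ∧ ∀ x ∈ p, BruhatLE cs x m

/-- `[I 0, …, I d]` is a singlestep expression. -/
def IsSinglestep (I : ℕ → Set B) (d : ℕ) : Prop :=
  ∀ k < d, (∃ s, s ∉ I k ∧ I (k + 1) = insert s (I k)) ∨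
    (∃ s, s ∈ I k ∧ I (k + 1) = I k \ {s})

/-- `p` is a path subordinate to the singlestep expression `[I 0, …, I d]`. -/
def IsSubPath (cs : CoxeterSystem M W) (I : ℕ → Set B) (d : ℕ) (p : ℕ → Set W) : Prop :=
  p 0 = doset cs (I 0) (I 0) 1 ∧
  (∀ i ≤ d, IsDCoset cs (I 0) (I i) (p i)) ∧
  ∀ k < d, (I k ⊆ I (k + 1) → p k ⊆ p (k + 1)) ∧ (I (k + 1) ⊆ I k → p (k + 1) ⊆ p k)

/-- The Demazure product `w_{I_0} * w_{I_1} * ⋯ * w_{I_d}` of the longest elements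
`wI 0, …, wI d`. -/
noncomputable def exprMax (cs : CoxeterSystem M W) (wI : ℕ → W) (d : ℕ) : W :=
  ((List.range d).map fun k => wI (k + 1)).foldl (dem cs) (wI 0)

section LiftingAux

open List
open scoped Classical

variable (cs : CoxeterSystem M W)

local prefix:100 "s" => cs.simple
local prefix:100 "π" => cs.wordProd
local prefix:100 "ℓ" => cs.length
local prefix:100 "ris" => cs.rightInvSeq

/-- One letter of the reflection-parity representation. -/
noncomputable def etaFun (i : B) (p : W × ZMod 2) : W × ZMod 2 :=
  (s i * p.1 * s i, p.2 + if p.1 = s i then 1 else 0)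

lemma etaFun_invol (i : B) (p : W × ZMod 2) : etaFun cs i (etaFun cs i p) = p := by
  obtain ⟨w, e⟩ := p
  have h1 : s i * (s i * w * s i) * s i = w := by
    have := cs.simple_mul_simple_self i
    calc s i * (s i * w * s i) * s i = (s i * s i) * w * (s i * s i) := by group
    _ = w := by rw [this]; group
  have h2 : (s i * w * s i = s i) ↔ (w = s i) := by
    constructor
    · intro h
      have := congrArg (fun z => s i * z * s i) h
      simpa [h1, cs.simple_mul_simple_cancel_left] using this
    · intro h; subst h; simp [cs.simple_mul_simple_self]
  simp only [etaFun, h1, h2]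
  refine Prod.ext rfl ?_
  show (e + if w = s i then 1 else 0) + (if w = s i then 1 else 0) = e
  by_cases hw : w = s i
  · have h11 : (1 + 1 : ZMod 2) = 0 := by decide
    subst hw
    rw [if_pos rfl, add_assoc, h11, add_zero]
  · simp [hw]

/-- One letter of the reflection-parity representation, as a permutation. -/
noncomputable def eta (i : B) : Equiv.Perm (W × ZMod 2) :=
  ⟨etaFun cs i, etaFun cs i, fun p => etaFun_invol cs i p, fun p => etaFun_invol cs i p⟩

lemma eta_apply (i : B) (p : W × ZMod 2) :
    eta cs i p = (s i * p.1 * s i, p.2 + if p.1 = s i then 1 else 0) := rfl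


section Braid

variable (i i' : B)

lemma sp_base : s i' * (s i * s i') = (s i * s i')⁻¹ * s i' := by
  have h : (s i * s i')⁻¹ = s i' * s i := by
    rw [mul_inv_rev, cs.inv_simple, cs.inv_simple]
  rw [h]; group

lemma sp_pow (k : ℕ) : s i' * (s i * s i') ^ k = ((s i * s i') ^ k)⁻¹ * s i' := by
  induction k with
  | zero => simp
  | succ k ih =>
    calc s i' * (s i * s i') ^ (k + 1)
        = (s i' * (s i * s i') ^ k) * (s i * s i') := by rw [pow_succ, mul_assoc]
      _ = ((s i * s i') ^ k)⁻¹ * (s i' * (s i * s i')) := by rw [ih, mul_assoc]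
      _ = ((s i * s i') ^ k)⁻¹ * ((s i * s i')⁻¹ * s i') := by rw [sp_base]
      _ = ((s i * s i') ^ (k + 1))⁻¹ * s i' := by
          rw [← mul_assoc, ← mul_inv_rev, ← pow_succ']

lemma pow_inv_mul_pow_inv (m k : ℕ) :
    ((s i * s i') ^ m)⁻¹ * ((s i * s i') ^ k)⁻¹ = ((s i * s i') ^ (m + k))⁻¹ := by
  rw [← mul_inv_rev, ← pow_add, add_comm]

lemma conjA (n : ℕ) :
    ((s i * s i') ^ n)⁻¹ * s i' * (s i * s i') ^ n = s i' * (s i * s i') ^ (2 * n) := by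
  calc ((s i * s i') ^ n)⁻¹ * s i' * (s i * s i') ^ n
      = ((s i * s i') ^ n)⁻¹ * (s i' * (s i * s i') ^ n) := by rw [mul_assoc]
    _ = ((s i * s i') ^ n)⁻¹ * (((s i * s i') ^ n)⁻¹ * s i') := by rw [sp_pow]
    _ = (((s i * s i') ^ n)⁻¹ * ((s i * s i') ^ n)⁻¹) * s i' := by rw [mul_assoc]
    _ = ((s i * s i') ^ (n + n))⁻¹ * s i' := by rw [pow_inv_mul_pow_inv]
    _ = ((s i * s i') ^ (2 * n))⁻¹ * s i' := by rw [two_mul]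
    _ = s i' * (s i * s i') ^ (2 * n) := by rw [sp_pow]

lemma conjB (n : ℕ) :
    ((s i * s i') ^ n)⁻¹ * (s i' * s i * s i') * (s i * s i') ^ n
      = s i' * (s i * s i') ^ (2 * n + 1) := by
  have h1 : s i' * s i * s i' = ((s i * s i') ^ 1)⁻¹ * s i' := by
    rw [pow_one, mul_inv_rev, cs.inv_simple, cs.inv_simple]
  calc ((s i * s i') ^ n)⁻¹ * (s i' * s i * s i') * (s i * s i') ^ n
      = ((s i * s i') ^ n)⁻¹ * (((s i * s i') ^ 1)⁻¹ * s i') * (s i * s i') ^ n := by rw [h1]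
    _ = (((s i * s i') ^ n)⁻¹ * ((s i * s i') ^ 1)⁻¹) * (s i' * (s i * s i') ^ n) := by
        rw [mul_assoc, mul_assoc, mul_assoc]
    _ = ((s i * s i') ^ (n + 1))⁻¹ * (((s i * s i') ^ n)⁻¹ * s i') := by
        rw [pow_inv_mul_pow_inv, sp_pow]
    _ = (((s i * s i') ^ (n + 1))⁻¹ * ((s i * s i') ^ n)⁻¹) * s i' := by rw [mul_assoc]
    _ = ((s i * s i') ^ (2 * n + 1))⁻¹ * s i' := by
        rw [pow_inv_mul_pow_inv, show n + 1 + n = 2 * n + 1 by omega]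
    _ = s i' * (s i * s i') ^ (2 * n + 1) := by rw [sp_pow]

end Braid

section PowFormula

variable (i i' : B)

lemma F_pow_apply (n : ℕ) (w : W) (e : ZMod 2) :
    ((eta cs i * eta cs i') ^ n) (w, e) =
      ((s i * s i') ^ n * w * ((s i * s i') ^ n)⁻¹,
        e + ((List.range (2 * n)).map
          (fun j => if w = s i' * (s i * s i') ^ j then (1 : ZMod 2) else 0)).sum) := by
  induction n with
  | zero => simp
  | succ n ih =>
    rw [pow_succ', Equiv.Perm.mul_apply, ih, Equiv.Perm.mul_apply]
    rw [eta_apply, eta_apply]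
    have hA : ((s i * s i') ^ n * w * ((s i * s i') ^ n)⁻¹ = s i') ↔
        (w = s i' * (s i * s i') ^ (2 * n)) := by
      rw [← conjA cs i i' n]
      constructor
      · intro h
        have := congrArg (fun z => ((s i * s i') ^ n)⁻¹ * z * (s i * s i') ^ n) h
        simpa [mul_assoc] using this
      · intro h
        subst h
        group
    have hB : (s i' * ((s i * s i') ^ n * w * ((s i * s i') ^ n)⁻¹) * s i' = s i) ↔
        (w = s i' * (s i * s i') ^ (2 * n + 1)) := by
      have hss : (s i' * ((s i * s i') ^ n * w * ((s i * s i') ^ n)⁻¹) * s i' = s i) ↔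
          ((s i * s i') ^ n * w * ((s i * s i') ^ n)⁻¹ = s i' * s i * s i') := by
        constructor
        · intro h
          have := congrArg (fun z => s i' * z * s i') h
          calc (s i * s i') ^ n * w * ((s i * s i') ^ n)⁻¹
              = s i' * (s i' * ((s i * s i') ^ n * w * ((s i * s i') ^ n)⁻¹) * s i') * s i' := by
                have h2 := cs.simple_mul_simple_self i'
                calc (s i * s i') ^ n * w * ((s i * s i') ^ n)⁻¹
                    = (s i' * s i') * ((s i * s i') ^ n * w * ((s i * s i') ^ n)⁻¹) *
                      (s i' * s i') := by rw [h2]; group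
                  _ = s i' * (s i' * ((s i * s i') ^ n * w * ((s i * s i') ^ n)⁻¹) * s i') *
                      s i' := by group
            _ = s i' * s i * s i' := by rw [h]
        · intro h
          rw [h]
          have h2 := cs.simple_mul_simple_self i'
          calc s i' * (s i' * s i * s i') * s i'
              = (s i' * s i') * s i * (s i' * s i') := by group
            _ = s i := by rw [h2]; group
      rw [hss, ← conjB cs i i' n]
      constructor
      · intro h
        have := congrArg (fun z => ((s i * s i') ^ n)⁻¹ * z * (s i * s i') ^ n) h
        simpa [mul_assoc] using this
      · intro h
        subst h
        group
    have hinv : (s i * s i')⁻¹ = s i' * s i := by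
      rw [mul_inv_rev, cs.inv_simple, cs.inv_simple]
    dsimp only
    refine Prod.ext ?_ ?_
    · dsimp only
      rw [pow_succ' (s i * s i') n, mul_inv_rev, hinv]
      group
    · dsimp only
      rw [show 2 * (n + 1) = (2 * n) + 1 + 1 by omega, List.range_succ, List.range_succ]
      simp only [List.map_append, List.sum_append, List.map_singleton, List.sum_cons,
        List.sum_nil, add_zero, hA, hB]
      ring

end PowFormula

lemma eta_liftable : M.IsLiftable (fun i => eta cs i) := by
  intro i i'
  refine Equiv.ext fun p => ?_
  obtain ⟨w, e⟩ := p
  show ((eta cs i * eta cs i') ^ M i i') (w, e) = (w, e)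
  rw [F_pow_apply]
  have hpow : (s i * s i') ^ M i i' = 1 := cs.simple_mul_simple_pow i i'
  refine Prod.ext ?_ ?_
  · dsimp only
    rw [hpow]; group
  · dsimp only
    rw [show 2 * M i i' = M i i' + M i i' by omega, List.range_add, List.map_append,
      List.sum_append, List.map_map]
    have hmap : ∀ j : ℕ,
        ((fun j => if w = s i' * (s i * s i') ^ j then (1 : ZMod 2) else 0) ∘
          (fun x => M i i' + x)) j
        = (fun j => if w = s i' * (s i * s i') ^ j then (1 : ZMod 2) else 0) j := by
      intro j
      simp only [Function.comp_apply]
      rw [pow_add, hpow, one_mul]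
    rw [List.map_congr_left (fun j _ => hmap j)]
    rw [CharTwo.add_self_eq_zero, add_zero]

/-- The reflection-parity representation. -/
noncomputable def phi : W →* Equiv.Perm (W × ZMod 2) :=
  cs.lift ⟨fun i => eta cs i, eta_liftable cs⟩

lemma phi_simple (i : B) : phi cs (s i) = eta cs i :=
  cs.lift_apply_simple (eta_liftable cs) i

/-- Parity of the number of times `x` appears in an inversion sequence of `w`. -/
noncomputable def Npar (w x : W) : ZMod 2 := ((phi cs w) (x, 0)).2

lemma phi_apply (w x : W) (e : ZMod 2) :
    (phi cs w) (x, e) = (w * x * w⁻¹, Npar cs w x + e) := by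
  induction w using cs.simple_induction_left generalizing e with
  | one =>
    simp only [map_one, Equiv.Perm.one_apply, Npar, map_one]
    refine Prod.ext (by group) (by simp)
  | mul_simple_left w i ih =>
    have key : ∀ f : ZMod 2, (phi cs (s i * w)) (x, f)
        = (s i * (w * x * w⁻¹) * s i, (Npar cs w x + f) + if w * x * w⁻¹ = s i then 1 else 0) := by
      intro f
      rw [map_mul, Equiv.Perm.mul_apply, ih f, phi_simple, eta_apply]
    have keyN : Npar cs (s i * w) x
        = (Npar cs w x + 0) + if w * x * w⁻¹ = s i then 1 else 0 := by
      rw [Npar, key 0]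
    rw [key e, keyN]
    refine Prod.ext ?_ (by ring)
    dsimp only
    rw [mul_inv_rev, cs.inv_simple]
    group

lemma Npar_mul (u v x : W) :
    Npar cs (u * v) x = Npar cs v x + Npar cs u (v * x * v⁻¹) := by
  rw [Npar, map_mul, Equiv.Perm.mul_apply, phi_apply, phi_apply]
  dsimp only
  ring

lemma Npar_simple (i : B) (x : W) :
    Npar cs (s i) x = if x = s i then 1 else 0 := by
  rw [Npar, phi_simple, eta_apply]
  dsimp only
  rw [zero_add]

lemma Npar_one (x : W) : Npar cs 1 x = 0 := by
  rw [Npar, map_one]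
  rfl

lemma Npar_wordProd (ω : List B) (t : W) :
    Npar cs (π ω) t
      = ((ris ω).map (fun r => if t = r then (1 : ZMod 2) else 0)).sum := by
  induction ω with
  | nil => simp [Npar_one]
  | cons i ω ih =>
    rw [cs.wordProd_cons, Npar_mul, Npar_simple, ih]
    show _ = ((((π ω)⁻¹ * s i * π ω :: ris ω).map
      (fun r => if t = r then (1 : ZMod 2) else 0))).sum
    rw [List.map_cons, List.sum_cons]
    have hiff : (π ω * t * (π ω)⁻¹ = s i) ↔ (t = (π ω)⁻¹ * s i * π ω) := by
      constructor
      · intro h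
        rw [← h]; group
      · intro h
        rw [h]; group
    rw [hiff]
    ring

lemma sum_eq_zero_of_not_mem {t : W} {L : List W} (h : t ∉ L) :
    (L.map (fun r => if t = r then (1 : ZMod 2) else 0)).sum = 0 := by
  induction L with
  | nil => rfl
  | cons x L ih =>
    rw [List.map_cons, List.sum_cons,
      if_neg (fun hx => h (by rw [hx]; exact List.mem_cons_self)),
      ih (fun hm => h (List.mem_cons_of_mem x hm)), add_zero]

lemma Npar_refl_self {t : W} (ht : cs.IsReflection t) : Npar cs t t = 1 := by
  obtain ⟨v, i, rfl⟩ := ht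
  have h1 : v * s i * v⁻¹ = v * (s i * v⁻¹) := by group
  rw [h1, Npar_mul]
  have h2 : s i * v⁻¹ * (v * (s i * v⁻¹)) * (s i * v⁻¹)⁻¹ = s i := by group
  rw [h2]
  have h3 : Npar cs (s i * v⁻¹) (v * (s i * v⁻¹)) = Npar cs v⁻¹ (v * (s i * v⁻¹)) + 1 := by
    rw [Npar_mul]
    have h4 : v⁻¹ * (v * (s i * v⁻¹)) * v⁻¹⁻¹ = s i := by group
    rw [h4, Npar_simple, if_pos rfl]
  have h5 : Npar cs v⁻¹ (v * (s i * v⁻¹)) + Npar cs v (s i) = 0 := by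
    have h6 := Npar_mul cs v v⁻¹ (v * (s i * v⁻¹))
    rw [mul_inv_cancel, Npar_one] at h6
    have h7 : v⁻¹ * (v * (s i * v⁻¹)) * v⁻¹⁻¹ = s i := by group
    rw [h7] at h6
    exact h6.symm
  rw [h3, add_right_comm, h5, zero_add]

lemma length_lt_of_Npar_one {u t : W} (ht : cs.IsReflection t)
    (h : Npar cs u t = 1) : ℓ (u * t) < ℓ u := by
  obtain ⟨ω, hred, rfl⟩ := cs.exists_reduced_word' u
  have hmem : t ∈ ris ω := by
    by_contra hmem
    rw [Npar_wordProd, sum_eq_zero_of_not_mem hmem] at h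
    exact one_ne_zero h.symm
  exact (cs.isRightInversion_of_mem_rightInvSeq hred hmem).2

lemma Npar_eq_one_of_length_lt {w t : W} (ht : cs.IsReflection t)
    (h : ℓ (w * t) < ℓ w) : Npar cs w t = 1 := by
  have htt : t * t = 1 := ht.mul_self
  have hw : w = (w * t) * t := by rw [mul_assoc, htt, mul_one]
  have h1 : Npar cs w t = Npar cs t t + Npar cs (w * t) (t * t * t⁻¹) := by
    conv_lhs => rw [hw]
    exact Npar_mul cs (w * t) t t
  have h2 : t * t * t⁻¹ = t := by group
  rw [h2, Npar_refl_self cs ht] at h1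
  have h3 : Npar cs (w * t) t = 0 := by
    by_contra h3
    have h4 : Npar cs (w * t) t = 1 := by
      have := h3
      revert this
      generalize Npar cs (w * t) t = z
      revert z
      decide
    have h5 := length_lt_of_Npar_one cs ht h4
    rw [mul_assoc, htt, mul_one] at h5
    omega
  rw [h3, add_zero] at h1
  exact h1

/-- Strong exchange property. -/
lemma strong_exchange {w t : W} (ht : cs.IsReflection t) (h : ℓ (w * t) < ℓ w)
    {ω : List B} (hred : cs.IsReduced ω) (hw : π ω = w) :
    ∃ j, j < ω.length ∧ π (ω.eraseIdx j) = w * t := by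
  have h1 : Npar cs w t = 1 := Npar_eq_one_of_length_lt cs ht h
  have hmem : t ∈ ris ω := by
    by_contra hmem
    rw [← hw, Npar_wordProd, sum_eq_zero_of_not_mem hmem] at h1
    exact one_ne_zero h1.symm
  obtain ⟨j, hj, hjt⟩ := List.mem_iff_getElem.mp hmem
  rw [cs.length_rightInvSeq] at hj
  refine ⟨j, hj, ?_⟩
  have := cs.wordProd_mul_getD_rightInvSeq ω j
  rw [List.getD_eq_getElem _ 1 (by rw [cs.length_rightInvSeq]; exact hj), hjt, hw] at this
  exact this.symm

/-- Every word contains a reduced sublist with the same product. -/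
lemma exists_reduced_sublist (ω : List B) :
    ∃ ω', ω'.Sublist ω ∧ cs.IsReduced ω' ∧ π ω' = π ω := by
  by_cases hred : cs.IsReduced ω
  · exact ⟨ω, List.Sublist.refl ω, hred, rfl⟩
  · have hne : ω ≠ [] := by
      rintro rfl
      exact hred (by simp [CoxeterSystem.IsReduced])
    have hlen1 : 1 ≤ ω.length := by
      cases ω with
      | nil => exact absurd rfl hne
      | cons a l => simp
    have hP : ∃ k, ¬ cs.IsReduced (ω.take (k + 1)) := by
      refine ⟨ω.length - 1, ?_⟩
      rwa [List.take_of_length_le (by omega)]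
    classical
    have hk : ¬ cs.IsReduced (ω.take (Nat.find hP + 1)) := Nat.find_spec hP
    set k := Nat.find hP with hkdef
    have hklt : k < ω.length := by
      have := Nat.find_min' hP (m := ω.length - 1) (by
        rwa [List.take_of_length_le (by omega)])
      omega
    have hkred : cs.IsReduced (ω.take k) := by
      by_cases hk0 : k = 0
      · rw [hk0]
        simp [CoxeterSystem.IsReduced]
      · have := Nat.find_min hP (m := k - 1) (by omega)
        rw [not_not] at this
        rwa [show k - 1 + 1 = k by omega] at this
    have htake : ω.take (k + 1) = ω.take k ++ [ω[k]] := by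
      rw [← List.take_concat_get hklt, List.concat_eq_append]
    set u := π (ω.take k) with hu
    have hkred' : ℓ (π (ω.take k)) = (ω.take k).length := hkred
    have hlenu : ℓ u = k := by
      rw [hu, hkred', List.length_take]
      omega
    have hπ : π (ω.take (k + 1)) = u * s (ω[k]) := by
      rw [htake, cs.wordProd_append, cs.wordProd_singleton]
    have hlt : ℓ (u * s (ω[k])) < ℓ u := by
      rcases cs.length_mul_simple u (ω[k]) with h | h
      · exfalso
        apply hk
        show ℓ (π (ω.take (k + 1))) = (ω.take (k + 1)).length
        rw [hπ, h, hlenu, List.length_take]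
        omega
      · omega
    obtain ⟨j, hj, hje⟩ := strong_exchange cs (cs.isReflection_simple (ω[k])) hlt
      hkred hu.symm
    rw [List.length_take] at hj
    set ω'' := (ω.take k).eraseIdx j ++ ω.drop (k + 1) with hww
    have hsub : ω''.Sublist ω := by
      have h1 : ((ω.take k).eraseIdx j).Sublist (ω.take (k + 1)) :=
        (List.eraseIdx_sublist _ j).trans (by rw [htake]; exact List.sublist_append_left _ _)
      have := List.Sublist.append h1 (List.Sublist.refl (ω.drop (k + 1)))
      rwa [List.take_append_drop (k + 1) ω] at this
    have hprod : π ω'' = π ω := by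
      rw [hww, cs.wordProd_append, hje, ← hπ, ← cs.wordProd_append,
        List.take_append_drop]
    have hlen : ω''.length < ω.length := by
      rw [hww, List.length_append, List.length_eraseIdx, if_pos (by
        rw [List.length_take]; omega), List.length_take, List.length_drop]
      omega
    obtain ⟨ω', h1, h2, h3⟩ := exists_reduced_sublist ω''
    exact ⟨ω', h1.trans hsub, h2, h3.trans hprod⟩
termination_by ω.length
decreasing_by exact hlen

lemma bruhat_refl (x : W) : BruhatLE cs x x := Relation.ReflTransGen.refl

lemma bruhat_trans {x y z : W} (h1 : BruhatLE cs x y) (h2 : BruhatLE cs y z) :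
    BruhatLE cs x z := Relation.ReflTransGen.trans h1 h2

/-- A single step in the Bruhat order. -/
lemma bruhat_step {a t : W} (ht : cs.IsReflection t) (hl : ℓ a < ℓ (a * t)) :
    BruhatLE cs a (a * t) :=
  Relation.ReflTransGen.single ⟨⟨t, ht, rfl⟩, hl⟩

/-- A single step, with left multiplication. -/
lemma bruhat_step_left {a t : W} (ht : cs.IsReflection t) (hl : ℓ a < ℓ (t * a)) :
    BruhatLE cs a (t * a) := by
  have h : t * a = a * (a⁻¹ * t * a) := by group
  have ht' : cs.IsReflection (a⁻¹ * t * a) := by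
    have := ht.conj a⁻¹
    rwa [inv_inv] at this
  rw [h] at hl ⊢
  exact bruhat_step cs ht' hl

lemma bruhat_length_le {x y : W} (h : BruhatLE cs x y) : ℓ x ≤ ℓ y := by
  induction h with
  | refl => exact le_refl _
  | tail _ h ih => exact le_of_lt (lt_of_le_of_lt ih h.2)

lemma bruhat_inv {x y : W} (h : BruhatLE cs x y) : BruhatLE cs x⁻¹ y⁻¹ := by
  induction h with
  | refl => exact bruhat_refl cs _
  | tail _ h ih =>
    rename_i b c _
    obtain ⟨⟨t, ht, rfl⟩, hlen⟩ := h
    refine bruhat_trans cs ih ?_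
    have he : (b * t)⁻¹ = b⁻¹ * (b * t * b⁻¹) := by
      rw [mul_inv_rev, ht.inv]; group
    have hl2 : ℓ b⁻¹ < ℓ (b⁻¹ * (b * t * b⁻¹)) := by
      rw [← he, cs.length_inv, cs.length_inv]
      exact hlen
    rw [he]
    exact bruhat_step cs (ht.conj b) hl2

/-- Bruhat smaller elements have reduced words that are sublists of any
reduced word of the bigger element. -/
lemma bruhat_subword {v w : W} (h : BruhatLE cs v w) :
    ∀ ω : List B, cs.IsReduced ω → π ω = w →
      ∃ ω', ω'.Sublist ω ∧ cs.IsReduced ω' ∧ π ω' = v := by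
  induction h with
  | refl =>
    intro ω hred hw
    exact ⟨ω, List.Sublist.refl ω, hred, hw⟩
  | tail _ h ih =>
    rename_i b c _
    intro ω hred hw
    obtain ⟨⟨t, ht, rfl⟩, hlen⟩ := h
    have hb : (b * t) * t = b := by
      rw [mul_assoc, ht.mul_self, mul_one]
    have hlt : ℓ ((b * t) * t) < ℓ (b * t) := by rw [hb]; exact hlen
    obtain ⟨j, hj, hje⟩ := strong_exchange cs ht hlt hred hw
    rw [hb] at hje
    obtain ⟨ω₂, hsub2, hred2, hprod2⟩ := exists_reduced_sublist cs (ω.eraseIdx j)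
    obtain ⟨ω', hsub', hred', hprod'⟩ := ih ω₂ hred2 (hprod2.trans hje)
    exact ⟨ω', (hsub'.trans hsub2).trans (List.eraseIdx_sublist ω j), hred', hprod'⟩

/-- Subword property statement. -/
def Sprop (w : W) : Prop :=
  ∀ ω : List B, cs.IsReduced ω → π ω = w →
    ∀ ω' : List B, ω'.Sublist ω → cs.IsReduced ω' → BruhatLE cs (π ω') w

/-- Left lifting, descent form. -/
def Uprop (w : W) : Prop :=
  ∀ (i : B) (u : W), ℓ (s i * w) < ℓ w → BruhatLE cs u w → ℓ u < ℓ (s i * u) →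
    BruhatLE cs u (s i * w)

/-- Left lifting, ascent form. -/
def Tprop (w : W) : Prop :=
  ∀ (i : B) (u : W), ℓ w < ℓ (s i * w) → BruhatLE cs u w → ℓ u < ℓ (s i * u) →
    BruhatLE cs (s i * u) (s i * w)

lemma joint (n : ℕ) : ∀ w : W, ℓ w = n → Sprop cs w ∧ Uprop cs w ∧ Tprop cs w := by
  induction n using Nat.strong_induction_on with
  | _ n ih =>
  intro w hw
  have IH : ∀ w' : W, ℓ w' < n → Sprop cs w' ∧ Uprop cs w' ∧ Tprop cs w' :=
    fun w' h => ih _ h w' rfl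
  have hT : Tprop cs w := by
    intro i u hz hu hus
    rcases Relation.ReflTransGen.cases_tail hu with rfl | ⟨c, huc, hstep⟩
    · exact bruhat_refl cs _
    · obtain ⟨⟨t, ht, rfl⟩, hlen⟩ := hstep
      rcases (Nat.lt_or_ge (ℓ (s i * c)) (ℓ c)) with hdesc | hge
      · -- descent case
        have hUc := (IH c (by omega)).2.1
        have husc : BruhatLE cs u (s i * c) := hUc i u hdesc huc hus
        have hTsc := (IH (s i * c) (by omega)).2.2
        have hcc : s i * (s i * c) = c := cs.simple_mul_simple_cancel_left i
        have h1 : BruhatLE cs (s i * u) (s i * (s i * c)) := by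
          refine hTsc i u ?_ husc hus
          rw [hcc]
          exact hdesc
        rw [hcc] at h1
        have h2 : BruhatLE cs c (c * t) := bruhat_step cs ht hlen
        have h3 : BruhatLE cs (c * t) (s i * (c * t)) :=
          bruhat_step_left cs (cs.isReflection_simple i) hz
        exact bruhat_trans cs (bruhat_trans cs h1 h2) h3
      · -- ascent case
        have hne := cs.length_simple_mul_ne c i
        have hasc : ℓ c < ℓ (s i * c) := by omega
        have hTc := (IH c (by omega)).2.2
        have h1 : BruhatLE cs (s i * u) (s i * c) := hTc i u hasc huc hus
        have hlen2 : ℓ (s i * c) < ℓ (s i * c * t) := by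
          have hb := cs.length_simple_mul c i
          rw [mul_assoc]
          omega
        have h2 : BruhatLE cs (s i * c) (s i * c * t) := bruhat_step cs ht hlen2
        rw [mul_assoc] at h2
        exact bruhat_trans cs h1 h2
  have hU : Uprop cs w := by
    intro i u hsw hu hus
    obtain ⟨δ, hδred, hδ⟩ := cs.exists_reduced_word' (s i * w)
    have hb := cs.length_simple_mul w i
    have hb2 := cs.length_simple_mul (s i * w) i
    rw [cs.simple_mul_simple_cancel_left] at hb2
    have hcanc : s i * π δ = w := by
      rw [← hδ, cs.simple_mul_simple_cancel_left]
    have hred : cs.IsReduced (i :: δ) := by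
      show ℓ (π (i :: δ)) = (i :: δ).length
      rw [cs.wordProd_cons, hcanc, List.length_cons]
      have : ℓ (π δ) = δ.length := hδred
      rw [← this, ← hδ]
      omega
    have hπ : π (i :: δ) = w := by rw [cs.wordProd_cons, hcanc]
    obtain ⟨ωu, hsubu, hredu, hprodu⟩ := bruhat_subword cs hu (i :: δ) hred hπ
    cases hsubu with
    | cons _ hsubu' =>
      have hS := (IH (s i * w) (by omega)).1
      have := hS δ hδred hδ.symm ωu hsubu' hredu
      rwa [hprodu] at this
    | cons_cons _ hsubu' =>
      exfalso
      rename_i γ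
      have hlu : ℓ (π (i :: γ)) = γ.length + 1 := hredu
      have hγred : cs.IsReduced γ := by
        have := CoxeterSystem.IsReduced.drop (ω := i :: γ) hredu 1
        simpa using this
      have hγlen : ℓ (π γ) = γ.length := hγred
      have hsiu : s i * u = π γ := by
        rw [← hprodu, cs.wordProd_cons, cs.simple_mul_simple_cancel_left]
      rw [hprodu] at hlu
      have h2 : ℓ (s i * u) = γ.length := by rw [hsiu]; exact hγlen
      omega
  have hS : Sprop cs w := by
    intro ω hred hπ ω' hsub hred'
    cases ω with
    | nil =>
      have : ω' = [] := List.sublist_nil.mp hsub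
      subst this
      rw [← hπ]
      exact bruhat_refl cs _
    | cons i α =>
      have hαred : cs.IsReduced α := by
        have := CoxeterSystem.IsReduced.drop (ω := i :: α) hred 1
        simpa using this
      have hαlen : ℓ (π α) = α.length := hαred
      have hwlen : ℓ w = α.length + 1 := by
        rw [← hπ]
        exact hred
      have hz : ℓ (π α) < ℓ (s i * π α) := by
        have : s i * π α = w := by rw [← hπ, cs.wordProd_cons]
        rw [this]
        omega
      have hstep : BruhatLE cs (π α) w := by
        have h3 : BruhatLE cs (π α) (s i * π α) :=
          bruhat_step_left cs (cs.isReflection_simple i) hz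
        rwa [show s i * π α = w by rw [← hπ, cs.wordProd_cons]] at h3
      cases hsub with
      | cons _ hsub' =>
        have hSα := (IH (π α) (by omega)).1
        exact bruhat_trans cs (hSα α hαred rfl ω' hsub' hred') hstep
      | cons_cons _ hsub' =>
        rename_i β
        have hβred : cs.IsReduced β := by
          have := CoxeterSystem.IsReduced.drop (ω := i :: β) hred' 1
          simpa using this
        have hβlen : ℓ (π β) = β.length := hβred
        have hulen : ℓ (π (i :: β)) = β.length + 1 := hred'
        have hSα := (IH (π α) (by omega)).1
        have huz : BruhatLE cs (π β) (π α) := hSα α hαred rfl β hsub' hβred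
        have hTα := (IH (π α) (by omega)).2.2
        have hus : ℓ (π β) < ℓ (s i * π β) := by
          rw [← cs.wordProd_cons]
          omega
        have := hTα i (π β) hz huz hus
        rwa [← cs.wordProd_cons, ← cs.wordProd_cons, hπ] at this
  exact ⟨hS, hU, hT⟩

lemma T_right {z u : W} {i : B} (hz : ℓ z < ℓ (z * s i)) (hu : BruhatLE cs u z)
    (hus : ℓ u < ℓ (u * s i)) : BruhatLE cs (u * s i) (z * s i) := by
  have hT := (joint cs (ℓ z⁻¹) z⁻¹ rfl).2.2
  have h1 : ℓ z⁻¹ < ℓ (s i * z⁻¹) := by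
    rw [show s i * z⁻¹ = (z * s i)⁻¹ by rw [mul_inv_rev, cs.inv_simple], cs.length_inv,
      cs.length_inv]
    exact hz
  have h2 : ℓ u⁻¹ < ℓ (s i * u⁻¹) := by
    rw [show s i * u⁻¹ = (u * s i)⁻¹ by rw [mul_inv_rev, cs.inv_simple], cs.length_inv,
      cs.length_inv]
    exact hus
  have h3 := hT i u⁻¹ h1 (bruhat_inv cs hu) h2
  have h4 := bruhat_inv cs h3
  rw [show s i * u⁻¹ = (u * s i)⁻¹ by rw [mul_inv_rev, cs.inv_simple],
    show s i * z⁻¹ = (z * s i)⁻¹ by rw [mul_inv_rev, cs.inv_simple],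
    inv_inv, inv_inv] at h4
  exact h4

lemma U_right {z u : W} {i : B} (hz : ℓ (z * s i) < ℓ z) (hu : BruhatLE cs u z)
    (hus : ℓ u < ℓ (u * s i)) : BruhatLE cs u (z * s i) := by
  have hU := (joint cs (ℓ z⁻¹) z⁻¹ rfl).2.1
  have h1 : ℓ (s i * z⁻¹) < ℓ z⁻¹ := by
    rw [show s i * z⁻¹ = (z * s i)⁻¹ by rw [mul_inv_rev, cs.inv_simple], cs.length_inv,
      cs.length_inv]
    exact hz
  have h2 : ℓ u⁻¹ < ℓ (s i * u⁻¹) := by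
    rw [show s i * u⁻¹ = (u * s i)⁻¹ by rw [mul_inv_rev, cs.inv_simple], cs.length_inv,
      cs.length_inv]
    exact hus
  have h3 := hU i u⁻¹ h1 (bruhat_inv cs hu) h2
  have h4 := bruhat_inv cs h3
  rw [show s i * z⁻¹ = (z * s i)⁻¹ by rw [mul_inv_rev, cs.inv_simple],
    inv_inv, inv_inv] at h4
  exact h4

/-- Lifting, ascent version: if `a ≤ b` and `b s > b` then `a s ≤ b s`. -/
lemma lift_ascent {a b : W} {i : B} (hab : BruhatLE cs a b) (hb : ℓ b < ℓ (b * s i)) :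
    BruhatLE cs (a * s i) (b * s i) := by
  have hne := cs.length_mul_simple_ne a i
  rcases Nat.lt_or_ge (ℓ a) (ℓ (a * s i)) with ha | ha
  · exact T_right cs hb hab ha
  · have h1 : BruhatLE cs (a * s i) a := by
      have h2 : a * s i * s i = a := cs.simple_mul_simple_cancel_right i
      have h3 : ℓ (a * s i) < ℓ (a * s i * s i) := by rw [h2]; omega
      have := bruhat_step cs (cs.isReflection_simple i) h3
      rwa [h2] at this
    have h4 : BruhatLE cs b (b * s i) := bruhat_step cs (cs.isReflection_simple i) hb
    exact bruhat_trans cs (bruhat_trans cs h1 hab) h4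

/-- Lifting, descent version: if `a ≤ b` and `b s < b` then `a s ≤ b`. -/
lemma lift_descent {a b : W} {i : B} (hab : BruhatLE cs a b) (hb : ℓ (b * s i) < ℓ b) :
    BruhatLE cs (a * s i) b := by
  have hne := cs.length_mul_simple_ne a i
  rcases Nat.lt_or_ge (ℓ a) (ℓ (a * s i)) with ha | ha
  · have h1 : BruhatLE cs a (b * s i) := U_right cs hb hab ha
    have h2 : ℓ (b * s i) < ℓ (b * s i * s i) := by
      rw [cs.simple_mul_simple_cancel_right]
      exact hb
    have h3 := T_right cs h2 h1 ha
    rwa [cs.simple_mul_simple_cancel_right] at h3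
  · have h1 : BruhatLE cs (a * s i) a := by
      have h2 : a * s i * s i = a := cs.simple_mul_simple_cancel_right i
      have h3 : ℓ (a * s i) < ℓ (a * s i * s i) := by rw [h2]; omega
      have := bruhat_step cs (cs.isReflection_simple i) h3
      rwa [h2] at this
    exact bruhat_trans cs h1 hab

lemma lifting_main {v w : W} (h : BruhatLE cs v w) (l : List B) (hl : cs.IsReduced l) :
    ∃ x', BruhatLE cs x' (π l) ∧ BruhatLE cs (v * π l) (w * x') ∧
      ℓ (w * x') = ℓ w + ℓ x' := by
  induction l using List.reverseRecOn with
  | nil =>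
    refine ⟨1, ?_, ?_, ?_⟩
    · exact bruhat_refl cs _
    · rw [cs.wordProd_nil, mul_one, mul_one]
      exact h
    · rw [mul_one, cs.length_one, add_zero]
  | append_singleton α i ihα =>
    have hαred : cs.IsReduced α := by
      have := CoxeterSystem.IsReduced.take (ω := α ++ [i]) hl α.length
      rwa [List.take_left] at this
    obtain ⟨x', hx1, hx2, hx3⟩ := ihα hαred
    have hπl : π (α ++ [i]) = π α * s i := by
      rw [cs.wordProd_append, cs.wordProd_singleton]
    have hαlen : ℓ (π α) = α.length := hαred
    have hylen : ℓ (π α) < ℓ (π α * s i) := by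
      have : ℓ (π (α ++ [i])) = α.length + 1 := by
        rw [hl]
        simp
      rw [hπl] at this
      omega
    have hne := cs.length_mul_simple_ne (w * x') i
    rcases Nat.lt_or_ge (ℓ (w * x')) (ℓ (w * x' * s i)) with hcase | hcase
    · -- ascent: multiply x' by s i
      refine ⟨x' * s i, ?_, ?_, ?_⟩
      · rw [hπl]
        exact lift_ascent cs hx1 hylen
      · rw [hπl, ← mul_assoc, ← mul_assoc]
        exact lift_ascent cs hx2 hcase
      · have e1 : ℓ (w * x' * s i) = ℓ (w * x') + 1 := by
          rcases cs.length_mul_simple (w * x') i with h' | h'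
          · exact h'
          · omega
        have e2 : ℓ (x' * s i) ≤ ℓ x' + 1 := by
          have := cs.length_mul_le x' (s i)
          rwa [cs.length_simple] at this
        have e3 : ℓ (w * (x' * s i)) ≤ ℓ w + ℓ (x' * s i) := cs.length_mul_le w (x' * s i)
        rw [← mul_assoc] at e3
        rw [← mul_assoc]
        omega
    · -- descent: keep x'
      have hcase' : ℓ (w * x' * s i) < ℓ (w * x') := by omega
      refine ⟨x', ?_, ?_, hx3⟩
      · rw [hπl]
        have hstep : BruhatLE cs (π α) (π α * s i) :=
          bruhat_step cs (cs.isReflection_simple i) hylen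
        exact bruhat_trans cs hx1 hstep
      · rw [hπl, ← mul_assoc]
        exact lift_descent cs hx2 hcase'


end LiftingAux

/-- Lifting: if `v ≤ w` then there is `x' ≤ x` with `v * x ≤ w * x'` and the
product `w * x'` reduced. -/
theorem lifting_right (cs : CoxeterSystem M W) (v w x : W) (h : BruhatLE cs v w) :
    ∃ x', BruhatLE cs x' x ∧ BruhatLE cs (v * x) (w * x') ∧
      cs.length (w * x') = cs.length w + cs.length x' := by
  obtain ⟨l, hlred, hx⟩ := cs.exists_reduced_word' x
  obtain ⟨x', h1, h2, h3⟩ := lifting_main cs h l hlred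
  rw [← hx] at h1 h2
  exact ⟨x', h1, h2, h3⟩

end CoxeterPaper
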